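/- For every natural number k, ν(8^k) = k + 1; that is, there are exactly k + 1 triples (x,y,z) ∈ ℕ³ with 0 ≤ x ≤ y ≤ z, z ≥ x + 1 and F(x,y,z) = 8^k. -/

import Mathlib

def F (x y z : ℕ) : ℤ :=
  (x : ℤ) ^ 3 + (y : ℤ) ^ 3 + (z : ℤ) ^ 3 - 3 * (x : ℤ) * (y : ℤ) * (z : ℤ)

noncomputable def nu (n : ℕ) : ℕ :=
  Set.ncard {t : ℕ × ℕ × ℕ |
    t.1 ≤ t.2.1 ∧ t.2.1 ≤ t.2.2 ∧ t.1 + 1 ≤ t.2.2 ∧ F t.1 t.2.1 t.2.2 = n}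

lemma pow2_mod3 (a : ℕ) : 2^a % 3 = if a % 2 = 0 then 1 else 2 := by
  induction a with
  | zero => rfl
  | succ n ih =>
    rw [pow_succ, Nat.mul_mod, ih]
    rcases Nat.mod_two_eq_zero_or_one n with h | h <;>
      rw [h] <;> rw [show (n+1) % 2 = 1 - n % 2 by omega, h] <;> norm_num

lemma Fid (x u v : ℕ) : F x (x+u) (x+u+v)
    = ((3*x+2*u+v) * (u*u+u*v+v*v) : ℕ) := by
  unfold F; push_cast; ring

lemma eisen : ∀ b u v : ℕ, u*u + u*v + v*v = 2^b →
    ∃ m, b = 2*m ∧ ((u = 2^m ∧ v = 0) ∨ (u = 0 ∧ v = 2^m)) := by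
  intro b
  induction b using Nat.strong_induction_on with
  | _ b ih =>
    intro u v h
    rcases Nat.eq_zero_or_pos b with hb | hb
    · subst hb
      have hu : u ≤ 1 := by nlinarith
      have hv : v ≤ 1 := by nlinarith
      interval_cases u <;> interval_cases v <;> simp_all
    · have h2 : (u*u + u*v + v*v) % 2 = 0 := by
        rw [h, show b = 1 + (b-1) by omega, pow_add]
        norm_num [Nat.mul_mod_right]
      have hm : (u % 2 * (u % 2) + u % 2 * (v % 2) + v % 2 * (v % 2)) % 2 = 0 := by
        conv at h2 => rw [Nat.add_mod, Nat.add_mod (u*u), Nat.mul_mod u u,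
          Nat.mul_mod u v, Nat.mul_mod v v]
        omega
      rcases Nat.mod_two_eq_zero_or_one u with hu | hu <;>
        rcases Nat.mod_two_eq_zero_or_one v with hv | hv <;> rw [hu, hv] at hm <;> try omega
      obtain ⟨u', hu'⟩ : 2 ∣ u := Nat.dvd_of_mod_eq_zero hu
      obtain ⟨v', hv'⟩ : 2 ∣ v := Nat.dvd_of_mod_eq_zero hv
      subst hu' hv'
      have h4 : 4 * (u'*u' + u'*v' + v'*v') = 2^b := by linarith [h]
      have hb2 : 2 ≤ b := by
        by_contra hc
        interval_cases b <;> omega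
      have hq : u'*u' + u'*v' + v'*v' = 2^(b-2) := by
        have h5 : 2^b = 4 * 2^(b-2) := by
          conv_lhs => rw [show b = 2 + (b-2) by omega]
          rw [pow_add]; norm_num
        omega
      obtain ⟨m, hm1, hm2⟩ := ih (b-2) (by omega) u' v' hq
      exact ⟨m+1, by omega, by rcases hm2 with ⟨h1,h2⟩|⟨h1,h2⟩ <;> [left; right] <;>
        constructor <;> simp [pow_succ] <;> omega⟩

def trip (k m : ℕ) : ℕ × ℕ × ℕ :=
  if (k + m) % 2 = 0 then
    ((2^(3*k-2*m) - 2^m)/3, (2^(3*k-2*m) - 2^m)/3, (2^(3*k-2*m) - 2^m)/3 + 2^m)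
  else
    ((2^(3*k-2*m) - 2^(m+1))/3, (2^(3*k-2*m) - 2^(m+1))/3 + 2^m,
      (2^(3*k-2*m) - 2^(m+1))/3 + 2^m)

lemma trip_mem (k m : ℕ) (hm : m ≤ k) :
    (trip k m).1 ≤ (trip k m).2.1 ∧ (trip k m).2.1 ≤ (trip k m).2.2 ∧
    (trip k m).1 + 1 ≤ (trip k m).2.2 ∧
    F (trip k m).1 (trip k m).2.1 (trip k m).2.2 = ((8:ℕ)^k : ℤ) := by
  have hpow : (1:ℕ) ≤ 2^m := Nat.one_le_two_pow
  unfold trip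
  split_ifs with hp
  · set x := (2^(3*k-2*m) - 2^m)/3 with hxdef
    have h1 : (2:ℕ)^m ≤ 2^(3*k-2*m) := Nat.pow_le_pow_right (by norm_num) (by omega)
    have h2 := pow2_mod3 (3*k-2*m); have h3 := pow2_mod3 m
    have hpar : (3*k-2*m) % 2 = m % 2 := by omega
    rw [hpar] at h2
    have hx : 3 * x + 2^m = 2^(3*k-2*m) := by rw [hxdef]; omega
    refine ⟨le_refl _, by simp, by simp; omega, ?_⟩
    have hF := Fid x 0 (2^m)
    simp only [add_zero, mul_zero, Nat.zero_mul, zero_add, Nat.mul_zero] at hF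
    rw [hF]
    norm_cast
    rw [hx, ← pow_add, ← pow_add, show 3*k-2*m + (m+m) = 3*k by omega,
      show (8:ℕ) = 2^3 by norm_num, ← pow_mul]
  · set x := (2^(3*k-2*m) - 2^(m+1))/3 with hxdef
    have hmk : m < k := by rcases Nat.lt_or_ge m k with h|h; exact h; omega
    have h1 : (2:ℕ)^(m+1) ≤ 2^(3*k-2*m) := Nat.pow_le_pow_right (by norm_num) (by omega)
    have h2 := pow2_mod3 (3*k-2*m); have h3 := pow2_mod3 (m+1)
    have hpar : (3*k-2*m) % 2 = (m+1) % 2 := by omega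
    rw [hpar] at h2
    have hx : 3 * x + 2^(m+1) = 2^(3*k-2*m) := by rw [hxdef]; omega
    refine ⟨by simp, le_refl _, by simp; omega, ?_⟩
    have hF := Fid x (2^m) 0
    simp only [add_zero, mul_zero, Nat.zero_mul, zero_add, Nat.mul_zero] at hF
    rw [hF]
    norm_cast
    have h2m : 2*2^m = 2^(m+1) := by rw [pow_succ]; ring
    rw [h2m, hx, ← pow_add, ← pow_add, show 3*k-2*m + (m+m) = 3*k by omega,
      show (8:ℕ) = 2^3 by norm_num, ← pow_mul]

lemma trip_back (k : ℕ) (x y z : ℕ) (h1 : x ≤ y) (h2 : y ≤ z) (h3 : x + 1 ≤ z)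
    (hF : F x y z = ((8:ℕ)^k : ℤ)) : ∃ m ≤ k, (x, y, z) = trip k m := by
  set u := y - x with hu
  set v := z - y with hv
  have hy : y = x + u := by omega
  have hz : z = x + u + v := by omega
  rw [hy, hz] at hF
  rw [Fid] at hF
  have hN : (3*x+2*u+v) * (u*u+u*v+v*v) = 8^k := by exact_mod_cast hF
  rw [show (8:ℕ)^k = 2^(3*k) by rw [show (8:ℕ) = 2^3 by norm_num, ← pow_mul]] at hN
  obtain ⟨b, hbk, hQ⟩ := (Nat.dvd_prime_pow Nat.prime_two).mp ⟨_, hN.symm.trans (mul_comm _ _)⟩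
  have hs : 3*x+2*u+v = 2^(3*k - b) := by
    have hpos : 0 < (2:ℕ)^b := Nat.pow_pos (by norm_num)
    have : (3*x+2*u+v) * 2^b = 2^(3*k-b) * 2^b := by
      conv_lhs => rw [← hQ]
      rw [hN, ← pow_add, show 3*k - b + b = 3*k by omega]
    exact Nat.eq_of_mul_eq_mul_right hpos this
  obtain ⟨m, hbm, hcase⟩ := eisen b u v hQ
  have hmk3 : 2*m ≤ 3*k := by omega
  rcases hcase with ⟨hu2, hv2⟩ | ⟨hu2, hv2⟩
  · rw [hu2, hv2] at hs
    have hs' : 3*x + 2^(m+1) = 2^(3*k-2*m) := by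
      rw [pow_succ]; rw [hbm] at hs; omega
    have hA := pow2_mod3 (3*k-2*m); have hB := pow2_mod3 (m+1)
    have hle : (2:ℕ)^(m+1) ≤ 2^(3*k-2*m) := by omega
    have hml : m + 1 ≤ 3*k-2*m := (Nat.pow_le_pow_iff_right (by norm_num)).mp hle
    have hpar : (3*k-2*m) % 2 = (m+1) % 2 := by
      rcases Nat.mod_two_eq_zero_or_one (3*k-2*m) with h|h <;>
        rcases Nat.mod_two_eq_zero_or_one (m+1) with h'|h' <;>
        simp [h, h'] at hA hB ⊢ <;> omega
    have hmk : m ≤ k := by omega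
    have hodd : (k + m) % 2 = 1 := by omega
    refine ⟨m, hmk, ?_⟩
    unfold trip
    rw [if_neg (by omega)]
    have hxv : x = (2^(3*k-2*m) - 2^(m+1))/3 := by omega
    simp only [Prod.mk.injEq]
    refine ⟨hxv, by omega, by omega⟩
  · rw [hu2, hv2] at hs
    have hs' : 3*x + 2^m = 2^(3*k-2*m) := by rw [hbm] at hs; omega
    have hA := pow2_mod3 (3*k-2*m); have hB := pow2_mod3 m
    have hle : (2:ℕ)^m ≤ 2^(3*k-2*m) := by omega
    have hml : m ≤ 3*k-2*m := (Nat.pow_le_pow_iff_right (by norm_num)).mp hle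
    have hpar : (3*k-2*m) % 2 = m % 2 := by
      rcases Nat.mod_two_eq_zero_or_one (3*k-2*m) with h|h <;>
        rcases Nat.mod_two_eq_zero_or_one m with h'|h' <;>
        simp [h, h'] at hA hB ⊢ <;> omega
    have hmk : m ≤ k := by omega
    have heven : (k + m) % 2 = 0 := by omega
    refine ⟨m, hmk, ?_⟩
    unfold trip
    rw [if_pos heven]
    have hxv : x = (2^(3*k-2*m) - 2^m)/3 := by omega
    simp only [Prod.mk.injEq]
    refine ⟨hxv, by omega, by omega⟩

lemma trip_inj (k : ℕ) : Set.InjOn (trip k) (Set.Iic k) := by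
  have hpinj : Function.Injective (fun m : ℕ => 2^m) :=
    fun a b h => Nat.pow_right_injective (le_refl 2) h
  intro m1 _ m2 _ heq
  unfold trip at heq
  have p1 : (0:ℕ) < 2^m1 := Nat.pow_pos (by norm_num)
  have p2 : (0:ℕ) < 2^m2 := Nat.pow_pos (by norm_num)
  split_ifs at heq <;> simp only [Prod.mk.injEq] at heq <;>
    [skip; omega; omega; skip] <;>
    exact hpinj (show (2:ℕ)^m1 = 2^m2 by omega)

theorem stmt_16 (k : ℕ) : nu (8 ^ k) = k + 1 := by
  unfold nu
  have hset : {t : ℕ × ℕ × ℕ |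
      t.1 ≤ t.2.1 ∧ t.2.1 ≤ t.2.2 ∧ t.1 + 1 ≤ t.2.2 ∧ F t.1 t.2.1 t.2.2 = ((8^k : ℕ) : ℤ)}
      = trip k '' Set.Iic k := by
    ext t
    constructor
    · rintro ⟨h1, h2, h3, h4⟩
      obtain ⟨m, hm, ht⟩ := trip_back k t.1 t.2.1 t.2.2 h1 h2 h3 (by exact_mod_cast h4)
      exact ⟨m, hm, ht.symm⟩
    · rintro ⟨m, hm, rfl⟩
      obtain ⟨a1, a2, a3, a4⟩ := trip_mem k m hm
      exact ⟨a1, a2, a3, by exact_mod_cast a4⟩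
  rw [hset, Set.ncard_image_of_injOn (trip_inj k)]
  rw [show (Set.Iic k : Set ℕ) = ↑(Finset.Iic k) by simp, Set.ncard_coe_finset,
    Nat.card_Iic]
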